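/- Let H be a Hopf k-algebra and (M, Δ_M) a right H-comodule, and let V be any k-vector space. Equip Hom_k(H,V) with the free contra-action θ_free(Φ)(h) = Φ(h₍₂₎)(h₍₁₎), equip Hom_k(M, Hom_k(H,V)) with the diagonal contra-action θ_diag(Φ)(m) = θ_free(h ↦ Φ(m₍₁₎h)(m₍₀₎)), and equip Hom_k(H, Hom_k(M,V)) with the free contra-action on the vector space Hom_k(M,V). Then the map α : Hom_k(M, Hom_k(H,V)) → Hom_k(H, Hom_k(M,V)) defined by α(φ)(h)(m) = φ(m₍₀₎)(S(m₍₁₎)h) is an isomorphism of left H-contramodules, with inverse β given by β(ψ)(m)(h) = ψ(m₍₁₎h)(m₍₀₎). -/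

import Mathlib

/-!
STATEMENT 9: For a Hopf algebra H, a right H-comodule M and a vector space V, the map
α : Hom_k(M, Hom_k(H,V)) → Hom_k(H, Hom_k(M,V)), α(φ)(h)(m) = φ(m₍₀₎)(S(m₍₁₎)h), is an
isomorphism of left H-contramodules from the diagonal contramodule Hom_k(M, Hom_k(H,V))
(diagonal action over the free contramodule Hom_k(H,V)) to the free contramodule
Hom_k(H, Hom_k(M,V)), with inverse β(ψ)(m)(h) = ψ(m₍₁₎h)(m₍₀₎).
-/

open TensorProduct LinearMap

noncomputable section

variable (k : Type*) [Field k]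
variable (H : Type*) [Semiring H] [HopfAlgebra k H]

def IsComodule {M : Type*} [AddCommGroup M] [Module k M]
    (ρ : M →ₗ[k] M ⊗[k] H) : Prop :=
  ((TensorProduct.assoc k M H H).toLinearMap ∘ₗ (TensorProduct.map ρ LinearMap.id) ∘ₗ ρ
      = (TensorProduct.map LinearMap.id Coalgebra.comul) ∘ₗ ρ) ∧
  ((TensorProduct.rid k M).toLinearMap ∘ₗ
      (TensorProduct.map LinearMap.id Coalgebra.counit) ∘ₗ ρ = LinearMap.id)

def IsContraHom {B D' : Type*} [AddCommGroup B] [Module k B] [AddCommGroup D'] [Module k D']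
    (θB : (H →ₗ[k] B) →ₗ[k] B) (θD : (H →ₗ[k] D') →ₗ[k] D')
    (f : B →ₗ[k] D') : Prop :=
  ∀ φ : H →ₗ[k] B, f (θB φ) = θD (f ∘ₗ φ)

/-- The free contra-action on `Hom_k(H,V)`: `θ_free(Φ)(h) = Φ(h₍₂₎)(h₍₁₎)`. -/
def freeContra (V : Type*) [AddCommGroup V] [Module k V] :
    (H →ₗ[k] (H →ₗ[k] V)) →ₗ[k] (H →ₗ[k] V) :=
  (LinearMap.lcomp k V (Coalgebra.comul (R := k) (A := H))) ∘ₗ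
    (TensorProduct.uncurry (RingHom.id k) H H V) ∘ₗ (LinearMap.lflip).toLinearMap

/-- The diagonal contra-action on `Hom_k(M,B)`:
`θ_diag(Φ)(m) = θ_B(h ↦ Φ(m₍₁₎h)(m₍₀₎))`. -/
def diagContra {M : Type*} [AddCommGroup M] [Module k M]
    {B : Type*} [AddCommGroup B] [Module k B]
    (ρ : M →ₗ[k] M ⊗[k] H) (θB : (H →ₗ[k] B) →ₗ[k] B) :
    (H →ₗ[k] (M →ₗ[k] B)) →ₗ[k] (M →ₗ[k] B) :=
  (LinearMap.llcomp k M (H →ₗ[k] B) B θB) ∘ₗ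
  (LinearMap.lcomp k (H →ₗ[k] B) ρ) ∘ₗ
  (TensorProduct.uncurry (RingHom.id k) M H (H →ₗ[k] B)) ∘ₗ
  (LinearMap.lflip).toLinearMap ∘ₗ
  (LinearMap.llcomp k H (H →ₗ[k] (M →ₗ[k] B)) (M →ₗ[k] (H →ₗ[k] B)) LinearMap.lflip.toLinearMap) ∘ₗ
  (TensorProduct.lcurry (RingHom.id k) H H (M →ₗ[k] B)) ∘ₗ
  (LinearMap.lcomp k (M →ₗ[k] B) (LinearMap.mul' k H))

/-- `m ⊗ h ↦ m₍₀₎ ⊗ S(m₍₁₎)h`. -/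
def twistS {M : Type*} [AddCommGroup M] [Module k M]
    (ρ : M →ₗ[k] M ⊗[k] H) : (M ⊗[k] H) →ₗ[k] (M ⊗[k] H) :=
  (TensorProduct.map LinearMap.id
      ((LinearMap.mul' k H) ∘ₗ
        (TensorProduct.map (HopfAlgebra.antipode (R := k)) LinearMap.id))) ∘ₗ
    (TensorProduct.assoc k M H H).toLinearMap ∘ₗ (TensorProduct.map ρ LinearMap.id)

/-- `m ⊗ h ↦ m₍₀₎ ⊗ m₍₁₎h`. -/
def twist {M : Type*} [AddCommGroup M] [Module k M]
    (ρ : M →ₗ[k] M ⊗[k] H) : (M ⊗[k] H) →ₗ[k] (M ⊗[k] H) :=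
  (TensorProduct.map LinearMap.id (LinearMap.mul' k H)) ∘ₗ
    (TensorProduct.assoc k M H H).toLinearMap ∘ₗ (TensorProduct.map ρ LinearMap.id)

/-- `α(φ)(h)(m) = φ(m₍₀₎)(S(m₍₁₎)h)`. -/
def alphaMap {M : Type*} [AddCommGroup M] [Module k M]
    (V : Type*) [AddCommGroup V] [Module k V] (ρ : M →ₗ[k] M ⊗[k] H) :
    (M →ₗ[k] (H →ₗ[k] V)) →ₗ[k] (H →ₗ[k] (M →ₗ[k] V)) :=
  (LinearMap.lflip).toLinearMap ∘ₗ (TensorProduct.lcurry (RingHom.id k) M H V) ∘ₗ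
    (LinearMap.lcomp k V (twistS k H ρ)) ∘ₗ (TensorProduct.uncurry (RingHom.id k) M H V)

/-- `β(ψ)(m)(h) = ψ(m₍₁₎h)(m₍₀₎)`. -/
def betaMap {M : Type*} [AddCommGroup M] [Module k M]
    (V : Type*) [AddCommGroup V] [Module k V] (ρ : M →ₗ[k] M ⊗[k] H) :
    (H →ₗ[k] (M →ₗ[k] V)) →ₗ[k] (M →ₗ[k] (H →ₗ[k] V)) :=
  (TensorProduct.lcurry (RingHom.id k) M H V) ∘ₗ (LinearMap.lcomp k V (twist k H ρ)) ∘ₗ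
    (TensorProduct.uncurry (RingHom.id k) M H V) ∘ₗ (LinearMap.lflip).toLinearMap

section MyAux

variable {M : Type*} [AddCommGroup M] [Module k M]
variable {V : Type*} [AddCommGroup V] [Module k V]

/-- generalized twist: `m ⊗ h ↦ m₀ ⊗ g(m₁) h`. -/
def myT (ρ : M →ₗ[k] M ⊗[k] H) (g : H →ₗ[k] H) :
    (M ⊗[k] H) →ₗ[k] (M ⊗[k] H) :=
  (TensorProduct.map LinearMap.id
      ((LinearMap.mul' k H) ∘ₗ TensorProduct.map g LinearMap.id)) ∘ₗ
    (TensorProduct.assoc k M H H).toLinearMap ∘ₗ (TensorProduct.map ρ LinearMap.id)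

lemma twistS_eq_myT (ρ : M →ₗ[k] M ⊗[k] H) :
    twistS k H ρ = myT k H ρ (HopfAlgebra.antipode (R := k)) := rfl

lemma twist_eq_myT (ρ : M →ₗ[k] M ⊗[k] H) :
    twist k H ρ = myT k H ρ LinearMap.id := by
  simp [twist, myT, TensorProduct.map_id]

lemma myT_tmul (ρ : M →ₗ[k] M ⊗[k] H) (g : H →ₗ[k] H) (m : M) (h : H) :
    myT k H ρ g (m ⊗ₜ[k] h) = lTensor M ((mulRight k h) ∘ₗ g) (ρ m) := by
  simp only [myT, LinearMap.comp_apply, TensorProduct.map_tmul, LinearMap.id_apply,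
    LinearEquiv.coe_coe]
  generalize ρ m = t
  induction t using TensorProduct.induction_on with
  | zero => simp
  | tmul a b => simp
  | add x y hx hy =>
    rw [TensorProduct.add_tmul, map_add, map_add, map_add, hx, hy]

lemma myT_lTensor (ρ : M →ₗ[k] M ⊗[k] H) (g f : H →ₗ[k] H) :
    (myT k H ρ g) ∘ₗ (lTensor M f)
      = (TensorProduct.map LinearMap.id ((LinearMap.mul' k H) ∘ₗ TensorProduct.map g f)) ∘ₗ
        (TensorProduct.assoc k M H H).toLinearMap ∘ₗ (TensorProduct.map ρ LinearMap.id) := by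
  apply TensorProduct.ext'
  intro m h
  simp only [LinearMap.comp_apply, lTensor_tmul, TensorProduct.map_tmul, LinearMap.id_apply,
    LinearEquiv.coe_coe]
  rw [myT_tmul]
  generalize ρ m = t
  induction t using TensorProduct.induction_on with
  | zero => simp
  | tmul a b => simp
  | add x y hx hy => rw [map_add, TensorProduct.add_tmul, map_add, map_add, hx, hy]

lemma myT_comp (ρ : M →ₗ[k] M ⊗[k] H) (hM : IsComodule k H ρ) (g g' : H →ₗ[k] H) :
    (myT k H ρ g) ∘ₗ (myT k H ρ g')
      = myT k H ρ ((LinearMap.mul' k H) ∘ₗ (TensorProduct.map g g') ∘ₗ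
          (Coalgebra.comul (R := k) (A := H))) := by
  apply TensorProduct.ext'
  intro m h
  rw [LinearMap.comp_apply, myT_tmul, ← LinearMap.comp_apply (myT k H ρ g), myT_lTensor]
  have hco : (TensorProduct.assoc k M H H).toLinearMap (TensorProduct.map ρ LinearMap.id (ρ m))
      = TensorProduct.map LinearMap.id (Coalgebra.comul (R := k) (A := H)) (ρ m) :=
    LinearMap.congr_fun hM.1 m
  rw [LinearMap.comp_apply, LinearMap.comp_apply, hco, myT_tmul]
  generalize ρ m = t
  induction t using TensorProduct.induction_on with
  | zero => simp
  | tmul a b =>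
    simp only [TensorProduct.map_tmul, LinearMap.id_apply, lTensor_tmul, LinearMap.comp_apply]
    congr 1
    generalize (Coalgebra.comul (R := k) (A := H)) b = w
    induction w using TensorProduct.induction_on with
    | zero => simp
    | tmul u v => simp [mul_assoc]
    | add x y hx hy => simp only [map_add, hx, hy]
  | add x y hx hy => simp only [map_add, hx, hy]

lemma myT_counit (ρ : M →ₗ[k] M ⊗[k] H) (hM : IsComodule k H ρ) :
    myT k H ρ ((Algebra.linearMap k H) ∘ₗ (Coalgebra.counit (R := k) (A := H)))
      = LinearMap.id := by
  apply TensorProduct.ext'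
  intro m h
  rw [myT_tmul]
  have hcu : lTensor M (Coalgebra.counit (R := k) (A := H)) (ρ m) = m ⊗ₜ[k] (1 : k) := by
    have h2 := LinearMap.congr_fun hM.2 m
    simp only [LinearMap.comp_apply, LinearMap.id_apply, LinearEquiv.coe_coe] at h2
    apply (TensorProduct.rid k M).injective
    simpa [lTensor] using h2
  rw [show ((mulRight k h) ∘ₗ (Algebra.linearMap k H) ∘ₗ (Coalgebra.counit (R := k) (A := H)))
      = ((mulRight k h) ∘ₗ (Algebra.linearMap k H)) ∘ₗ (Coalgebra.counit (R := k) (A := H))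
      from rfl, lTensor_comp, LinearMap.comp_apply, hcu]
  simp

lemma twistS_comp_twist (ρ : M →ₗ[k] M ⊗[k] H) (hM : IsComodule k H ρ) :
    (twistS k H ρ) ∘ₗ (twist k H ρ) = LinearMap.id := by
  rw [twistS_eq_myT, twist_eq_myT, myT_comp k H ρ hM]
  rw [show (TensorProduct.map (HopfAlgebra.antipode (R := k) (A := H)) LinearMap.id)
      = (HopfAlgebra.antipode (R := k) (A := H)).rTensor H from rfl]
  rw [HopfAlgebra.mul_antipode_rTensor_comul]
  exact myT_counit k H ρ hM

lemma twist_comp_twistS (ρ : M →ₗ[k] M ⊗[k] H) (hM : IsComodule k H ρ) :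
    (twist k H ρ) ∘ₗ (twistS k H ρ) = LinearMap.id := by
  rw [twistS_eq_myT, twist_eq_myT, myT_comp k H ρ hM]
  rw [show (TensorProduct.map LinearMap.id (HopfAlgebra.antipode (R := k) (A := H)))
      = (HopfAlgebra.antipode (R := k) (A := H)).lTensor H from rfl]
  rw [HopfAlgebra.mul_antipode_lTensor_comul]
  exact myT_counit k H ρ hM


section Generic
variable {A B C : Type*} [AddCommMonoid A] [Module k A] [AddCommMonoid B] [Module k B]
  [AddCommMonoid C] [Module k C]

lemma my_uncurry_lcurry (f : A ⊗[k] B →ₗ[k] C) :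
    TensorProduct.uncurry (RingHom.id k) A B C (TensorProduct.lcurry (RingHom.id k) A B C f) = f := by
  apply TensorProduct.ext'; intro a b; simp

lemma my_lcurry_uncurry (f : A →ₗ[k] B →ₗ[k] C) :
    TensorProduct.lcurry (RingHom.id k) A B C (TensorProduct.uncurry (RingHom.id k) A B C f) = f := by
  apply LinearMap.ext; intro a; apply LinearMap.ext; intro b; simp

lemma my_lflip_lflip (f : A →ₗ[k] B →ₗ[k] C) :
    (LinearMap.lflip (R₀ := k) (LinearMap.lflip (R₀ := k) f : B →ₗ[k] A →ₗ[k] C) : A →ₗ[k] B →ₗ[k] C) = f := by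
  apply LinearMap.ext; intro a; apply LinearMap.ext; intro b; rfl

end Generic

lemma twist_tmul (ρ : M →ₗ[k] M ⊗[k] H) (m : M) (h : H) :
    twist k H ρ (m ⊗ₜ[k] h) = lTensor M (mulRight k h) (ρ m) := by
  rw [twist_eq_myT, myT_tmul, LinearMap.comp_id]

lemma betaMap_eq (ρ : M →ₗ[k] M ⊗[k] H) (ψ : H →ₗ[k] (M →ₗ[k] V)) :
    betaMap k H V ρ ψ = TensorProduct.lcurry (RingHom.id k) M H V
      ((TensorProduct.uncurry (RingHom.id k) M H V (LinearMap.lflip (R₀ := k) ψ)) ∘ₗ twist k H ρ) := rfl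

lemma alphaMap_eq (ρ : M →ₗ[k] M ⊗[k] H) (φ : M →ₗ[k] (H →ₗ[k] V)) :
    alphaMap k H V ρ φ = LinearMap.lflip (R₀ := k) (TensorProduct.lcurry (RingHom.id k) M H V
      ((TensorProduct.uncurry (RingHom.id k) M H V φ) ∘ₗ twistS k H ρ)) := rfl

lemma beta_comp_alpha (ρ : M →ₗ[k] M ⊗[k] H) (hM : IsComodule k H ρ) :
    (betaMap k H V ρ) ∘ₗ (alphaMap k H V ρ) = LinearMap.id := by
  apply LinearMap.ext; intro φ
  rw [LinearMap.comp_apply, LinearMap.id_apply, betaMap_eq, alphaMap_eq]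
  simp only [my_lflip_lflip, my_uncurry_lcurry]
  rw [LinearMap.comp_assoc, twistS_comp_twist k H ρ hM, LinearMap.comp_id, my_lcurry_uncurry]

lemma alpha_comp_beta (ρ : M →ₗ[k] M ⊗[k] H) (hM : IsComodule k H ρ) :
    (alphaMap k H V ρ) ∘ₗ (betaMap k H V ρ) = LinearMap.id := by
  apply LinearMap.ext; intro ψ
  rw [LinearMap.comp_apply, LinearMap.id_apply, betaMap_eq, alphaMap_eq]
  simp only [my_uncurry_lcurry, my_lcurry_uncurry]
  rw [LinearMap.comp_assoc, twist_comp_twistS k H ρ hM, LinearMap.comp_id, my_lcurry_uncurry,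
    my_lflip_lflip]

lemma freeContra_eq {W : Type*} [AddCommGroup W] [Module k W] (ψ : H →ₗ[k] (H →ₗ[k] W)) :
    freeContra k H W ψ = (TensorProduct.uncurry (RingHom.id k) H H W (LinearMap.lflip (R₀ := k) ψ)) ∘ₗ
      (Coalgebra.comul (R := k) (A := H)) := rfl

/-- multiplication of `H ⊗ H` as a linear map on `(H⊗H)⊗(H⊗H)`. -/
def mu2 : ((H ⊗[k] H) ⊗[k] (H ⊗[k] H)) →ₗ[k] (H ⊗[k] H) :=
  (TensorProduct.map (LinearMap.mul' k H) (LinearMap.mul' k H)) ∘ₗ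
    (TensorProduct.tensorTensorTensorComm k H H H H).toLinearMap

lemma mu2_tmul (z w : H ⊗[k] H) : mu2 k H (z ⊗ₜ[k] w) = z * w := by
  induction z using TensorProduct.induction_on with
  | zero => simp [TensorProduct.zero_tmul]
  | tmul p q =>
    induction w using TensorProduct.induction_on with
    | zero => simp [TensorProduct.tmul_zero]
    | tmul r s =>
      simp [mu2, Algebra.TensorProduct.tmul_mul_tmul]
    | add x y hx hy => rw [TensorProduct.tmul_add, map_add, hx, hy, mul_add]
  | add x y hx hy => rw [TensorProduct.add_tmul, map_add, hx, hy, add_mul]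


lemma betaHom (ρ : M →ₗ[k] M ⊗[k] H) (hM : IsComodule k H ρ)
    (ψ : H →ₗ[k] (H →ₗ[k] (M →ₗ[k] V))) :
    betaMap k H V ρ (freeContra k H (M →ₗ[k] V) ψ)
      = diagContra k H ρ (freeContra k H V) ((betaMap k H V ρ) ∘ₗ ψ) := by
  have assoc1 : ∀ m : M,
      (TensorProduct.assoc k M H H).toLinearMap (TensorProduct.map ρ LinearMap.id (ρ m))
        = lTensor M (Coalgebra.comul (R := k) (A := H)) (ρ m) :=
    fun m => LinearMap.congr_fun hM.1 m
  set cE : (H ⊗[k] H) →ₗ[k] (M →ₗ[k] V) :=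
    TensorProduct.uncurry (RingHom.id k) H H (M →ₗ[k] V) (LinearMap.lflip (R₀ := k) ψ) with hcE
  set E : (M ⊗[k] (H ⊗[k] H)) →ₗ[k] V :=
    TensorProduct.uncurry (RingHom.id k) M (H ⊗[k] H) V cE.flip with hE
  set J : (M ⊗[k] H) →ₗ[k] (H →ₗ[k] (H →ₗ[k] V)) :=
    TensorProduct.uncurry (RingHom.id k) M H (H →ₗ[k] (H →ₗ[k] V))
      (LinearMap.lflip (R₀ := k)
        ((LinearMap.llcomp k H (H →ₗ[k] (M →ₗ[k] (H →ₗ[k] V)))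
            (M →ₗ[k] (H →ₗ[k] (H →ₗ[k] V))) LinearMap.lflip.toLinearMap)
          (TensorProduct.lcurry (RingHom.id k) H H (M →ₗ[k] (H →ₗ[k] V))
            (((betaMap k H V ρ) ∘ₗ ψ) ∘ₗ LinearMap.mul' k H)))) with hJ
  apply LinearMap.ext; intro m; apply LinearMap.ext; intro h
  have hL : betaMap k H V ρ (freeContra k H (M →ₗ[k] V) ψ) m h
      = TensorProduct.uncurry (RingHom.id k) M H V (LinearMap.lflip (R₀ := k) (freeContra k H (M →ₗ[k] V) ψ))
          (twist k H ρ (m ⊗ₜ[k] h)) := rfl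
  have hR : diagContra k H ρ (freeContra k H V) ((betaMap k H V ρ) ∘ₗ ψ) m h
      = TensorProduct.uncurry (RingHom.id k) H H V (LinearMap.lflip (R₀ := k) (J (ρ m)))
          ((Coalgebra.comul (R := k) (A := H)) h) := rfl
  rw [hL, hR]
  have claim1 : ∀ t : M ⊗[k] H,
      TensorProduct.uncurry (RingHom.id k) M H V (LinearMap.lflip (R₀ := k) (freeContra k H (M →ₗ[k] V) ψ)) t
        = E (lTensor M (Coalgebra.comul (R := k) (A := H)) t) := by
    intro t
    induction t using TensorProduct.induction_on with
    | zero => simp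
    | tmul a b =>
      simp [freeContra, hE, hcE, TensorProduct.uncurry_apply, LinearMap.lflip_apply,
        LinearMap.flip_apply, LinearMap.lcomp_apply, LinearMap.comp_apply, lTensor_tmul]
    | add x y hx hy => simp only [map_add, LinearMap.add_apply, hx, hy]
  have claim2 : ∀ (t : M ⊗[k] H) (c : H ⊗[k] H),
      TensorProduct.uncurry (RingHom.id k) H H V (LinearMap.lflip (R₀ := k) (J t)) c
        = E (lTensor M (mu2 k H) ((TensorProduct.assoc k M (H ⊗[k] H) (H ⊗[k] H)).toLinearMap
            (((TensorProduct.assoc k M H H).toLinearMap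
              ((TensorProduct.map ρ LinearMap.id) t)) ⊗ₜ[k] c))) := by
    intro t c
    induction c using TensorProduct.induction_on with
    | zero => simp
    | tmul u v =>
      induction t using TensorProduct.induction_on with
      | zero => simp
      | tmul m' x =>
        have hJval : TensorProduct.uncurry (RingHom.id k) H H V (LinearMap.lflip (R₀ := k) (J (m' ⊗ₜ[k] x)))
            (u ⊗ₜ[k] v) = betaMap k H V ρ (ψ (x * v)) m' u := rfl
        rw [hJval, betaMap_eq, TensorProduct.lcurry_apply, LinearMap.comp_apply, twist_tmul]
        simp only [TensorProduct.map_tmul, LinearMap.id_apply]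
        generalize ρ m' = s
        induction s using TensorProduct.induction_on with
        | zero => simp
        | tmul a b =>
          simp [hE, hcE, mu2, TensorProduct.tensorTensorTensorComm_tmul,
            TensorProduct.assoc_tmul, TensorProduct.map_tmul, LinearMap.mul'_apply,
            TensorProduct.uncurry_apply, LinearMap.lflip_apply, LinearMap.flip_apply,
            lTensor_tmul, mulRight_apply]
        | add x1 y1 hx1 hy1 =>
          simp only [map_add, LinearMap.add_apply, TensorProduct.add_tmul, hx1, hy1]
      | add x1 y1 hx1 hy1 => simp only [map_add, LinearMap.add_apply, TensorProduct.add_tmul, hx1, hy1]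
    | add c1 c2 hc1 hc2 => simp only [map_add, LinearMap.add_apply, TensorProduct.tmul_add, hc1, hc2]
  have claim3 : lTensor M (Coalgebra.comul (R := k) (A := H)) (twist k H ρ (m ⊗ₜ[k] h))
      = lTensor M (mu2 k H) ((TensorProduct.assoc k M (H ⊗[k] H) (H ⊗[k] H)).toLinearMap
          (((TensorProduct.assoc k M H H).toLinearMap
            ((TensorProduct.map ρ LinearMap.id) (ρ m))) ⊗ₜ[k]
              ((Coalgebra.comul (R := k) (A := H)) h))) := by
    rw [twist_tmul, assoc1 m]
    generalize ρ m = t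
    induction t using TensorProduct.induction_on with
    | zero => simp
    | tmul a b =>
      simp only [lTensor_tmul, LinearMap.comp_apply, mulRight_apply,
        TensorProduct.assoc_tmul, LinearEquiv.coe_coe]
      congr 1
      rw [Bialgebra.comul_mul, mu2_tmul]
    | add x y hx hy => simp only [map_add, TensorProduct.add_tmul, hx, hy]
  rw [claim1, claim3, ← claim2]

lemma alphaHom (ρ : M →ₗ[k] M ⊗[k] H) (hM : IsComodule k H ρ) :
    IsContraHom k H (diagContra k H ρ (freeContra k H V)) (freeContra k H (M →ₗ[k] V))
      (alphaMap k H V ρ) := by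
  intro Φ
  have h1 := betaHom k H ρ hM ((alphaMap k H V ρ) ∘ₗ Φ)
  rw [← LinearMap.comp_assoc, beta_comp_alpha k H ρ hM, LinearMap.id_comp] at h1
  calc alphaMap k H V ρ (diagContra k H ρ (freeContra k H V) Φ)
      = alphaMap k H V ρ (betaMap k H V ρ
          (freeContra k H (M →ₗ[k] V) ((alphaMap k H V ρ) ∘ₗ Φ))) := by rw [h1]
    _ = freeContra k H (M →ₗ[k] V) ((alphaMap k H V ρ) ∘ₗ Φ) := by
        rw [← LinearMap.comp_apply, alpha_comp_beta k H ρ hM, LinearMap.id_apply]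

end MyAux

/-- The hom identity (free case): `Hom_k(M, Hom_k(H,V)) ≅ Hom_k(H, Hom_k(M,V))`
as `H`-contramodules, via `α`, with inverse `β`. -/
theorem alphaMap_contraIso
    (M : Type*) [AddCommGroup M] [Module k M]
    (ρ : M →ₗ[k] M ⊗[k] H) (hM : IsComodule k H ρ)
    (V : Type*) [AddCommGroup V] [Module k V] :
    IsContraHom k H (diagContra k H ρ (freeContra k H V)) (freeContra k H (M →ₗ[k] V))
      (alphaMap k H V ρ) ∧
    (betaMap k H V ρ) ∘ₗ (alphaMap k H V ρ) = LinearMap.id ∧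
    (alphaMap k H V ρ) ∘ₗ (betaMap k H V ρ) = LinearMap.id := by
  exact ⟨alphaHom k H ρ hM, beta_comp_alpha k H ρ hM, alpha_comp_beta k H ρ hM⟩

end
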